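/- (Corollary 1, stable case, infinitesimal form.) Let E = EuclideanSpace ℝ (Fin d), let A : E →L[ℝ] E be a self-adjoint continuous linear operator that is positive definite (⟪x, A x⟫ > 0 for all x ≠ 0), let u ∈ E with u ≠ 0, and set w = A u. Let ξ ∈ E satisfy the orthogonality condition ⟪u, ξ + w⟫ = 0, and set v = ξ + w. Then there exists ε > 0 such that for every real λ with 0 < |λ| < ε and λ · (⟪ξ,w⟫ + ‖w‖²) > 0, the angle between u + λ•v and w is strictly smaller than the angle between u and w: θ(u + λ•v, w) < θ(u, w). -/

import Mathlib

open RealInnerProductSpace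

set_option maxHeartbeats 1000000 in
theorem aga_pulled_toward_stable_fixed_point (d : ℕ)
    (A : EuclideanSpace ℝ (Fin d) →L[ℝ] EuclideanSpace ℝ (Fin d))
    (hA : IsSelfAdjoint A)
    (hpos : ∀ x : EuclideanSpace ℝ (Fin d), x ≠ 0 → 0 < (⟪x, A x⟫ : ℝ))
    (u : EuclideanSpace ℝ (Fin d)) (hu : u ≠ 0)
    (w : EuclideanSpace ℝ (Fin d)) (hw : w = A u)
    (ξ : EuclideanSpace ℝ (Fin d)) (horth : (⟪u, ξ + w⟫ : ℝ) = 0)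
    (v : EuclideanSpace ℝ (Fin d)) (hv : v = ξ + w) :
    ∃ ε > 0, ∀ lam : ℝ, 0 < |lam| → |lam| < ε →
      0 < lam * ((⟪ξ, w⟫ : ℝ) + ‖w‖ ^ 2) →
      InnerProductGeometry.angle (u + lam • v) w < InnerProductGeometry.angle u w := by
  have hc : 0 < (⟪u, w⟫ : ℝ) := hw ▸ hpos u hu
  have huv : (⟪u, v⟫ : ℝ) = 0 := hv ▸ horth
  have hwne : w ≠ 0 := by
    rintro rfl; rw [inner_zero_right] at hc; exact lt_irrefl 0 hc
  have hs : (⟪ξ, w⟫ : ℝ) + ‖w‖ ^ 2 = ⟪v, w⟫ := by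
    rw [hv, inner_add_left, real_inner_self_eq_norm_sq]
  have ha : 0 < ‖u‖ := norm_pos_iff.mpr hu
  have hwpos : 0 < ‖w‖ := norm_pos_iff.mpr hwne
  by_cases hsv : (⟪v, w⟫ : ℝ) = 0
  · refine ⟨1, one_pos, fun lam _ _ hcond => ?_⟩
    rw [hs, hsv, mul_zero] at hcond
    exact absurd hcond (lt_irrefl 0)
  · have hvne : v ≠ 0 := fun h => hsv (by simp [h])
    have hb : 0 < ‖v‖ := norm_pos_iff.mpr hvne
    have habs : 0 < |(⟪v, w⟫ : ℝ)| := abs_pos.mpr hsv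
    set a := ‖u‖
    set b := ‖v‖
    set c := (⟪u, w⟫ : ℝ)
    set s := (⟪v, w⟫ : ℝ)
    refine ⟨2 * a ^ 2 * |s| / (c * b ^ 2), by positivity, fun lam hl hle hcond => ?_⟩
    have hls : 0 < lam * s := by rwa [hs] at hcond
    have hlsabs : lam * s = |lam| * |s| := by
      rw [← abs_mul]; exact (abs_of_pos hls).symm
    have hn2 : ‖u + lam • v‖ ^ 2 = a ^ 2 + lam ^ 2 * b ^ 2 := by
      rw [norm_add_sq_real, real_inner_smul_right, huv, norm_smul]
      simp [mul_pow, sq_abs]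
      rfl
    have hip : (⟪u + lam • v, w⟫ : ℝ) = c + lam * s := by
      rw [inner_add_left, real_inner_smul_left]
    have hxne : u + lam • v ≠ 0 := by
      intro h
      have h0 : a ^ 2 + lam ^ 2 * b ^ 2 = 0 := by rw [← hn2, h]; simp
      nlinarith [sq_nonneg lam]
    have hn_pos : 0 < ‖u + lam • v‖ := norm_pos_iff.mpr hxne
    set n := ‖u + lam • v‖ with hn
    have hlam : |lam| * (c * b ^ 2) < 2 * a ^ 2 * |s| := by
      have := (lt_div_iff₀ (by positivity : (0:ℝ) < c * b ^ 2)).mp hle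
      linarith
    have hkey : c * n < (c + lam * s) * a := by
      have h1 : (c * n) ^ 2 < ((c + lam * s) * a) ^ 2 := by
        have h3 := mul_lt_mul_of_pos_left hlam (mul_pos hc hl)
        have h4 : c ^ 2 * lam ^ 2 * b ^ 2 < 2 * c * a ^ 2 * (lam * s) := by
          calc c ^ 2 * lam ^ 2 * b ^ 2 = c * |lam| * (|lam| * (c * b ^ 2)) := by
                rw [← sq_abs lam]; ring
            _ < c * |lam| * (2 * a ^ 2 * |s|) := h3
            _ = 2 * c * a ^ 2 * (lam * s) := by rw [hlsabs]; ring
        have e1 : (c * n) ^ 2 = c ^ 2 * a ^ 2 + c ^ 2 * lam ^ 2 * b ^ 2 := by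
          rw [mul_pow, hn2]; ring
        have e2 : ((c + lam * s) * a) ^ 2
            = c ^ 2 * a ^ 2 + 2 * c * a ^ 2 * (lam * s) + (lam * s) ^ 2 * a ^ 2 := by ring
        rw [e1, e2]
        have h5 : 0 ≤ (lam * s) ^ 2 * a ^ 2 := by positivity
        linarith
      have h2 : 0 ≤ (c + lam * s) * a := by nlinarith
      exact lt_of_pow_lt_pow_left₀ 2 h2 h1
    unfold InnerProductGeometry.angle
    apply Real.strictAntiOn_arccos
    · constructor
      · exact (abs_le.mp (abs_real_inner_div_norm_mul_norm_le_one u w)).1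
      · exact (abs_le.mp (abs_real_inner_div_norm_mul_norm_le_one u w)).2
    · constructor
      · exact (abs_le.mp (abs_real_inner_div_norm_mul_norm_le_one (u + lam • v) w)).1
      · exact (abs_le.mp (abs_real_inner_div_norm_mul_norm_le_one (u + lam • v) w)).2
    · rw [hip, div_lt_div_iff₀ (by positivity) (by positivity)]
      nlinarith [hwpos, hkey]
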